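/- Let f : ℝ³ → ℝ be continuously differentiable with f_v(t,u,v) ≠ 0 for all (t,u,v) ∈ ℝ³, where f_t, f_u, f_v denote the partial derivatives of f in its first, second and third arguments. Let σ : ℝ² → ℝ be continuous and define g(t,u,v) = [σ(u, f(t,u,v)) − f(t,u,v)·f_u(t,u,v) − f_t(t,u,v)] / f_v(t,u,v). If x, y : I → ℝ are differentiable on an open interval I and satisfy x'(t) = f(t,x(t),y(t)) and y'(t) = g(t,x(t),y(t)) for all t ∈ I, then x is twice differentiable on I and satisfies the autonomous (time-independent) second-order equation x''(t) = σ(x(t), x'(t)) for all t ∈ I. -/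

import Mathlib

/-- Corollary 2 (quantitative core): with `g = (σ(u,f) − f·f_u − f_t)/f_v`, the
`x`-component of any flow of `ẋ = f(t,x,y)`, `ẏ = g(t,x,y)` satisfies the autonomous
second-order equation `ẍ = σ(x, ẋ)`. -/
theorem autonomous_folding
    (f g : ℝ → ℝ → ℝ → ℝ) (σ : ℝ → ℝ → ℝ)
    (hf : ContDiff ℝ 1 (fun p : ℝ × ℝ × ℝ => f p.1 p.2.1 p.2.2))
    (hfv : ∀ t u v, deriv (fun r => f t u r) v ≠ 0)
    (hσ : Continuous (fun p : ℝ × ℝ => σ p.1 p.2))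
    (hgdef : ∀ t u v, g t u v =
      (σ u (f t u v) - f t u v * deriv (fun r => f t r v) u
        - deriv (fun r => f r u v) t) / deriv (fun r => f t u r) v)
    (a b : ℝ) (x y : ℝ → ℝ)
    (hx : ∀ t ∈ Set.Ioo a b, HasDerivAt x (f t (x t) (y t)) t)
    (hy : ∀ t ∈ Set.Ioo a b, HasDerivAt y (g t (x t) (y t)) t) :
    ∀ t ∈ Set.Ioo a b, HasDerivAt (deriv x) (σ (x t) (deriv x t)) t := by
  set F : ℝ × ℝ × ℝ → ℝ := fun p => f p.1 p.2.1 p.2.2 with hF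
  have hdF : Differentiable ℝ F := hf.differentiable one_ne_zero
  intro t ht
  have hmem : Set.Ioo a b ∈ nhds t := isOpen_Ioo.mem_nhds ht
  have hxt := hx t ht
  have hyt := hy t ht
  set p : ℝ × ℝ × ℝ := (t, x t, y t) with hp
  set D := fderiv ℝ F p with hD
  have hFd : HasFDerivAt F D p := (hdF p).hasFDerivAt
  -- partial derivatives
  have htpart : HasDerivAt (fun r => f r (x t) (y t)) (D (1, 0, 0)) t := by
    have hcurve : HasDerivAt (fun r : ℝ => (r, x t, y t)) ((1 : ℝ), (0 : ℝ), (0 : ℝ)) t :=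
      HasDerivAt.prodMk (hasDerivAt_id t) (hasDerivAt_const t (x t, y t))
    exact hFd.comp_hasDerivAt t hcurve
  have hupart : HasDerivAt (fun r => f t r (y t)) (D (0, 1, 0)) (x t) := by
    have hcurve : HasDerivAt (fun r : ℝ => (t, r, y t)) ((0 : ℝ), (1 : ℝ), (0 : ℝ)) (x t) :=
      HasDerivAt.prodMk (hasDerivAt_const (x t) t) (HasDerivAt.prodMk (hasDerivAt_id (x t)) (hasDerivAt_const (x t) (y t)))
    have : HasFDerivAt F D (t, x t, y t) := hFd
    exact this.comp_hasDerivAt (x t) hcurve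
  have hvpart : HasDerivAt (fun r => f t (x t) r) (D (0, 0, 1)) (y t) := by
    have hcurve : HasDerivAt (fun r : ℝ => (t, x t, r)) ((0 : ℝ), (0 : ℝ), (1 : ℝ)) (y t) :=
      HasDerivAt.prodMk (hasDerivAt_const (y t) t) (HasDerivAt.prodMk (hasDerivAt_const (y t) (x t)) (hasDerivAt_id (y t)))
    have : HasFDerivAt F D (t, x t, y t) := hFd
    exact this.comp_hasDerivAt (y t) hcurve
  have hdt : deriv (fun r => f r (x t) (y t)) t = D (1, 0, 0) := htpart.deriv
  have hdu : deriv (fun r => f t r (y t)) (x t) = D (0, 1, 0) := hupart.deriv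
  have hdv : deriv (fun r => f t (x t) r) (y t) = D (0, 0, 1) := hvpart.deriv
  have hvne : D (0, 0, 1) ≠ 0 := hdv ▸ hfv t (x t) (y t)
  -- derivative of s ↦ f s (x s) (y s)
  have hc : HasDerivAt (fun s => (s, x s, y s)) (1, f t (x t) (y t), g t (x t) (y t)) t :=
    HasDerivAt.prodMk (hasDerivAt_id t) (HasDerivAt.prodMk hxt hyt)
  have hcomp : HasDerivAt (fun s => F (s, x s, y s))
      (D (1, f t (x t) (y t), g t (x t) (y t))) t :=
      by have := (show HasFDerivAt F D (t, x t, y t) from hFd).comp_hasDerivAt t hc; exact this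
  -- compute the value
  have hsplit : ((1 : ℝ), f t (x t) (y t), g t (x t) (y t))
      = (1, 0, 0) + f t (x t) (y t) • ((0 : ℝ), (1 : ℝ), (0 : ℝ))
        + g t (x t) (y t) • ((0 : ℝ), (0 : ℝ), (1 : ℝ)) := by
    simp [Prod.ext_iff]
  have hval : D (1, f t (x t) (y t), g t (x t) (y t))
      = D (1, 0, 0) + f t (x t) (y t) * D (0, 1, 0) + g t (x t) (y t) * D (0, 0, 1) := by
    rw [hsplit, map_add, map_add, map_smul, map_smul, smul_eq_mul, smul_eq_mul]
  have hg : g t (x t) (y t) * D (0, 0, 1)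
      = σ (x t) (f t (x t) (y t)) - f t (x t) (y t) * D (0, 1, 0) - D (1, 0, 0) := by
    rw [hgdef, hdt, hdu, hdv]
    field_simp
  have hval2 : D (1, f t (x t) (y t), g t (x t) (y t)) = σ (x t) (f t (x t) (y t)) := by
    rw [hval, hg]; ring
  have hderivx : deriv x t = f t (x t) (y t) := hxt.deriv
  have hcomp2 : HasDerivAt (fun s => F (s, x s, y s)) (σ (x t) (deriv x t)) t := by
    rw [hderivx]; rwa [hval2] at hcomp
  refine hcomp2.congr_of_eventuallyEq ?_
  filter_upwards [hmem] with s hs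
  exact (hx s hs).deriv
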